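/- Let q ∈ ℂ with 0 < |q| < 1. Then for all n, n' ∈ ℕ, Σ_{s=0}^{n} (−1)^{n−s} q^{(n−s)(n−s−1)/2} (q;q)_{s+n'} / ((q;q)_s² (q;q)_{n−s}) = q^{n²} (q;q)_{n'} [n' choose n]_q / (q;q)_n. In particular, this sum vanishes whenever n > n'. -/

import Mathlib

open Finset

/-- Finite q-Pochhammer symbol `(a;q)_n`. -/
noncomputable def qPoch (a q : ℂ) (n : ℕ) : ℂ := ∏ i ∈ Finset.range n, (1 - a * q ^ i)

/-- q-binomial coefficient. -/
noncomputable def qBinom (q : ℂ) (M N : ℕ) : ℂ :=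
  if N ≤ M then qPoch q q M / (qPoch q q N * qPoch q q (M - N)) else 0

section Aux

open PowerSeries

lemma qPoch_zero' (q : ℂ) : qPoch q q 0 = 1 := by simp [qPoch]

lemma qPoch_succ' (q : ℂ) (k : ℕ) : qPoch q q (k+1) = qPoch q q k * (1 - q^(k+1)) := by
  simp [qPoch, Finset.prod_range_succ, pow_succ']

lemma one_sub_pow_ne {q : ℂ} (hq1 : ‖q‖ < 1) (k : ℕ) : (1 : ℂ) - q^(k+1) ≠ 0 := by
  intro h
  have h2 : q ^ (k+1) = 1 := by linear_combination -h
  have : ‖q ^ (k+1)‖ < 1 := by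
    rw [norm_pow]
    calc ‖q‖ ^ (k+1) ≤ ‖q‖ ^ 1 :=
          pow_le_pow_of_le_one (norm_nonneg q) hq1.le (by omega)
      _ < 1 := by simpa using hq1
  rw [h2] at this; simp at this

lemma qPoch_ne_zero {q : ℂ} (hq1 : ‖q‖ < 1) (k : ℕ) : qPoch q q k ≠ 0 := by
  induction k with
  | zero => simp [qPoch_zero']
  | succ k ih => rw [qPoch_succ']; exact mul_ne_zero ih (one_sub_pow_ne hq1 k)

lemma qBinom_zero_right {q : ℂ} (hq1 : ‖q‖ < 1) (M : ℕ) : qBinom q M 0 = 1 := by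
  rw [qBinom, if_pos (Nat.zero_le M), Nat.sub_zero, qPoch_zero', one_mul,
    div_self (qPoch_ne_zero hq1 M)]

lemma qBinom_self {q : ℂ} (hq1 : ‖q‖ < 1) (M : ℕ) : qBinom q M M = 1 := by
  rw [qBinom, if_pos le_rfl, Nat.sub_self, qPoch_zero', mul_one,
    div_self (qPoch_ne_zero hq1 M)]

lemma qBinom_eq_zero (q : ℂ) {M N : ℕ} (h : M < N) : qBinom q M N = 0 := by
  simp [qBinom, not_le.2 h]

lemma qBinom_symm (q : ℂ) {M N : ℕ} (h : N ≤ M) : qBinom q M (M - N) = qBinom q M N := by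
  rw [qBinom, qBinom, if_pos (Nat.sub_le _ _), if_pos h, Nat.sub_sub_self h, mul_comm]

/-- Pascal (second form): `[N+1, K+1] = [N, K+1] + q^(N-K) [N, K]`. -/
lemma pascal2 {q : ℂ} (hq1 : ‖q‖ < 1) (N K : ℕ) :
    qBinom q (N+1) (K+1) = qBinom q N (K+1) + q^(N-K) * qBinom q N K := by
  rcases lt_trichotomy N K with h | rfl | h
  · rw [qBinom_eq_zero q (by omega), qBinom_eq_zero q (by omega), qBinom_eq_zero q h]
    ring
  · rw [qBinom_self hq1, qBinom_eq_zero q (by omega), qBinom_self hq1]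
    simp
  · obtain ⟨d, rfl⟩ : ∃ d, N = K + d + 1 := ⟨N - K - 1, by omega⟩
    rw [qBinom, qBinom, qBinom, if_pos (by omega), if_pos (by omega), if_pos (by omega)]
    rw [show K + d + 1 + 1 - (K + 1) = d + 1 by omega, show K + d + 1 - (K + 1) = d by omega,
        show K + d + 1 - K = d + 1 by omega]
    have hP := qPoch_ne_zero hq1
    have hu := one_sub_pow_ne hq1
    rw [show K + d + 1 + 1 = (K + d + 1) + 1 by ring, qPoch_succ' q (K+d+1),
        qPoch_succ' q d, qPoch_succ' q K]
    field_simp [hP K, hP d, hP (K+d+1), hu K, hu d, hu (K+d+1)]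
    ring

/-- Product `∏ (1 - a q^i X)` as a power series. -/
noncomputable def Pp (q a : ℂ) (k : ℕ) : PowerSeries ℂ :=
  ∏ i ∈ Finset.range k, (1 - PowerSeries.C (a * q ^ i) * PowerSeries.X)

/-- Generating series of `a^j [m+j, j]`. -/
noncomputable def Gg (q a : ℂ) (m : ℕ) : PowerSeries ℂ :=
  PowerSeries.mk fun j => a ^ j * qBinom q (m + j) j

lemma coeff_one_sub_CX_mul (c : ℂ) (φ : PowerSeries ℂ) :
    (∀ k, (coeff (k+1)) ((1 - PowerSeries.C c * PowerSeries.X) * φ)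
      = coeff (k+1) φ - c * coeff k φ)
    ∧ (coeff 0) ((1 - PowerSeries.C c * PowerSeries.X) * φ) = coeff 0 φ := by
  constructor
  · intro k
    rw [sub_mul, one_mul, map_sub, mul_assoc, PowerSeries.coeff_C_mul,
      PowerSeries.coeff_succ_X_mul]
  · rw [sub_mul, one_mul, map_sub, mul_assoc]
    simp

lemma Pp_succ (q a : ℂ) (k : ℕ) :
    Pp q a (k+1) = (1 - PowerSeries.C (a * q ^ k) * PowerSeries.X) * Pp q a k := by
  rw [Pp, Finset.prod_range_succ, mul_comm, Pp]

/-- The series `Gg q a m` is inverse to `Pp q a (m+1)`. -/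
lemma Pp_mul_Gg {q : ℂ} (hq1 : ‖q‖ < 1) (a : ℂ) (m : ℕ) :
    Pp q a (m+1) * Gg q a m = 1 := by
  induction m with
  | zero =>
    have h1 : Pp q a 1 = 1 - PowerSeries.C a * PowerSeries.X := by
      simp [Pp, Finset.prod_range_one]
    rw [h1]
    apply PowerSeries.ext
    intro n
    cases n with
    | zero =>
      rw [(coeff_one_sub_CX_mul a _).2, Gg, coeff_mk]
      simp [qBinom_zero_right hq1]
    | succ k =>
      rw [(coeff_one_sub_CX_mul a _).1, Gg, coeff_mk, coeff_mk]
      have hb : ∀ j, qBinom q (0 + j) j = 1 := by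
        intro j; rw [Nat.zero_add, qBinom_self hq1]
      rw [hb, hb]
      rw [PowerSeries.coeff_one]
      simp [pow_succ]
      ring
  | succ m ih =>
    have key : (1 - PowerSeries.C (a * q ^ (m+1)) * PowerSeries.X) * Gg q a (m+1)
        = Gg q a m := by
      apply PowerSeries.ext
      intro n
      cases n with
      | zero =>
        rw [(coeff_one_sub_CX_mul _ _).2, Gg, Gg, coeff_mk, coeff_mk]
        simp [qBinom_zero_right hq1]
      | succ k =>
        rw [(coeff_one_sub_CX_mul _ _).1, Gg, Gg, coeff_mk, coeff_mk, coeff_mk]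
        have hp : qBinom q (m + 1 + (k+1)) (k+1)
            = qBinom q (m + (k+1)) (k+1) + q^(m+1) * qBinom q (m + 1 + k) k := by
          have := pascal2 hq1 (m + 1 + k) k
          rw [show m + 1 + k - k = m + 1 by omega] at this
          rw [show m + 1 + (k+1) = m + 1 + k + 1 by ring, this,
            show m + 1 + k = m + (k+1) by ring]
        rw [hp]
        ring
    rw [Pp_succ, mul_assoc, mul_left_comm, key, ih]

/-- Gauss q-binomial theorem: the coefficients of `Pp`. -/
lemma coeff_Pp {q : ℂ} (hq1 : ‖q‖ < 1) (a : ℂ) (k : ℕ) (s : ℕ) :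
    coeff s (Pp q a k) = (-1)^s * a^s * q^(s*(s-1)/2) * qBinom q k s := by
  induction k generalizing s with
  | zero =>
    rw [Pp, Finset.prod_range_zero, PowerSeries.coeff_one]
    cases s with
    | zero => simp [qBinom_zero_right hq1]
    | succ t => simp [qBinom_eq_zero q (Nat.succ_pos t)]
  | succ k ih =>
    rw [Pp_succ]
    cases s with
    | zero =>
      rw [(coeff_one_sub_CX_mul _ _).2, ih 0]
      simp [qBinom_zero_right hq1]
    | succ t =>
      rw [(coeff_one_sub_CX_mul _ _).1, ih (t+1), ih t]
      rcases le_or_gt (t+1) (k+1) with h | h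
      · rw [pascal2 hq1 k t]
        have tri : (t+1)*(t+1-1)/2 = t*(t-1)/2 + t := by
          rw [show (t+1)*(t+1-1)/2 = (t+1).choose 2 from (Nat.choose_two_right _).symm,
            show t*(t-1)/2 = t.choose 2 from (Nat.choose_two_right _).symm,
            Nat.choose_succ_succ]
          simp [Nat.add_comm]
        have he : k + t*(t-1)/2 = (t+1)*(t+1-1)/2 + (k - t) := by omega
        have hq : q^k * q^(t*(t-1)/2) = q^((t+1)*(t+1-1)/2) * q^(k-t) := by
          rw [← pow_add, ← pow_add, he]
        linear_combination ((-1:ℂ)^(t+1) * a^(t+1) * qBinom q k t) * hq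
      · rw [qBinom_eq_zero q (by omega), qBinom_eq_zero q (by omega),
          qBinom_eq_zero q (by omega)]
        ring

lemma Pp_split (q : ℂ) (a b : ℕ) : Pp q 1 (a + b) = Pp q 1 a * Pp q (q^a) b := by
  rw [Pp, Pp, Pp, Finset.prod_range_add]
  congr 1
  apply Finset.prod_congr rfl
  intro i _
  rw [one_mul, pow_add]

/-- Key coefficient computation. -/
lemma key_coeff {q : ℂ} (hq1 : ‖q‖ < 1) (n m : ℕ) :
    coeff n (Pp q 1 n * Gg q 1 m) = q^(n^2) * qBinom q m n := by
  rcases le_or_gt n m with h | h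
  · have h3 : Pp q 1 (m+1) = Pp q 1 n * Pp q (q^n) (m-n+1) := by
      have e : n + (m - n + 1) = m + 1 := by omega
      rw [← e, Pp_split]
    have hkey : Pp q 1 n * Gg q 1 m = Gg q (q^n) (m-n) := by
      calc Pp q 1 n * Gg q 1 m
          = Pp q 1 n * Gg q 1 m * (Pp q (q^n) (m-n+1) * Gg q (q^n) (m-n)) := by
            rw [Pp_mul_Gg hq1, mul_one]
        _ = (Pp q 1 (m+1) * Gg q 1 m) * Gg q (q^n) (m-n) := by rw [h3]; ring
        _ = Gg q (q^n) (m-n) := by rw [Pp_mul_Gg hq1, one_mul]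
    rw [hkey, Gg, coeff_mk, show m - n + n = m by omega, ← pow_mul,
      show n * n = n^2 from (sq n).symm]
  · have h3 : Pp q 1 n = Pp q 1 (m+1) * Pp q (q^(m+1)) (n-(m+1)) := by
      have e : (m + 1) + (n - (m+1)) = n := by omega
      conv_lhs => rw [← e]
      rw [Pp_split]
    have hkey : Pp q 1 n * Gg q 1 m = Pp q (q^(m+1)) (n-(m+1)) := by
      calc Pp q 1 n * Gg q 1 m
          = (Pp q 1 (m+1) * Gg q 1 m) * Pp q (q^(m+1)) (n-(m+1)) := by rw [h3]; ring
        _ = Pp q (q^(m+1)) (n-(m+1)) := by rw [Pp_mul_Gg hq1, one_mul]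
    rw [hkey, coeff_Pp hq1, qBinom_eq_zero q (show n-(m+1) < n by omega),
      qBinom_eq_zero q h]
    ring

/-- The second q-Chu–Vandermonde summation. -/
lemma qvandermonde {q : ℂ} (hq1 : ‖q‖ < 1) (n m : ℕ) :
    ∑ s ∈ Finset.range (n+1), (-1:ℂ)^(n-s) * q^((n-s)*(n-s-1)/2)
        * qBinom q n s * qBinom q (s+m) s = q^(n^2) * qBinom q m n := by
  set g : ℕ → ℂ := fun s => coeff s (Pp q 1 n) * coeff (n - s) (Gg q 1 m) with hg
  calc ∑ s ∈ Finset.range (n+1), (-1:ℂ)^(n-s) * q^((n-s)*(n-s-1)/2)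
        * qBinom q n s * qBinom q (s+m) s
      = ∑ s ∈ Finset.range (n+1), g (n + 1 - 1 - s) := by
        apply Finset.sum_congr rfl
        intro s hs
        have hsn : s ≤ n := Nat.lt_succ_iff.mp (Finset.mem_range.mp hs)
        rw [hg]
        simp only []
        rw [show n + 1 - 1 - s = n - s by omega, show n - (n - s) = s by omega,
          coeff_Pp hq1, Gg, coeff_mk, one_pow, one_pow, qBinom_symm q hsn,
          show m + s = s + m by ring]
        ring
    _ = ∑ s ∈ Finset.range (n+1), g s := Finset.sum_range_reflect g (n+1)
    _ = coeff n (Pp q 1 n * Gg q 1 m) := by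
        rw [PowerSeries.coeff_mul, Finset.Nat.sum_antidiagonal_eq_sum_range_succ_mk]
    _ = q^(n^2) * qBinom q m n := key_coeff hq1 n m

end Aux

/-- Equation (5.6): the evaluation of the sum `Φ_{n,n'}(q)` from Section 5,
proved via the second q-Chu–Vandermonde summation; in particular the sum
vanishes whenever `n > n'`. -/
theorem Phi_evaluation (q : ℂ)
    (hq0 : 0 < ‖q‖) (hq1 : ‖q‖ < 1) (n n' : ℕ) :
    (∑ s ∈ Finset.range (n + 1),
      (-1 : ℂ) ^ (n - s) * q ^ ((n - s) * (n - s - 1) / 2) * qPoch q q (s + n') /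
        (qPoch q q s ^ 2 * qPoch q q (n - s))) =
      q ^ (n ^ 2) * qPoch q q n' * qBinom q n' n / qPoch q q n ∧
    (n' < n →
      (∑ s ∈ Finset.range (n + 1),
        (-1 : ℂ) ^ (n - s) * q ^ ((n - s) * (n - s - 1) / 2) * qPoch q q (s + n') /
          (qPoch q q s ^ 2 * qPoch q q (n - s))) = 0) := by
  have hP := qPoch_ne_zero hq1
  have main : (∑ s ∈ Finset.range (n + 1),
      (-1 : ℂ) ^ (n - s) * q ^ ((n - s) * (n - s - 1) / 2) * qPoch q q (s + n') /
        (qPoch q q s ^ 2 * qPoch q q (n - s))) =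
      q ^ (n ^ 2) * qPoch q q n' * qBinom q n' n / qPoch q q n := by
    have step : ∀ s ∈ Finset.range (n + 1),
        (-1 : ℂ) ^ (n - s) * q ^ ((n - s) * (n - s - 1) / 2) * qPoch q q (s + n') /
          (qPoch q q s ^ 2 * qPoch q q (n - s))
        = (qPoch q q n' / qPoch q q n) *
          ((-1:ℂ)^(n-s) * q^((n-s)*(n-s-1)/2) * qBinom q n s * qBinom q (s+n') s) := by
      intro s hs
      have hsn : s ≤ n := Nat.lt_succ_iff.mp (Finset.mem_range.mp hs)
      rw [qBinom, qBinom, if_pos hsn, if_pos (Nat.le_add_right s n'),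
        Nat.add_sub_cancel_left]
      field_simp [hP s, hP n, hP n', hP (n-s), hP (s+n')]
    rw [Finset.sum_congr rfl step, ← Finset.mul_sum, qvandermonde hq1 n n']
    field_simp [hP n]
  refine ⟨main, fun hlt => ?_⟩
  rw [main, qBinom_eq_zero q hlt]
  ring
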